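/- If L ⊆ binom(X,2) is an edge-weight lasso for a binary X-tree T, then the graph Γ(L) = (X, L) is connected. -/

import Mathlib

/- Common definitions for formalizing results of Dress, Huber & Steel,
   "Lassoing a phylogenetic tree I: Basic properties, shellings, and covers".

   Trees are modelled as simple graphs on an ambient vertex type `U`;
   the vertex set of the tree is the support of the graph (every vertex of a
   tree with at least two vertices has degree >= 1). -/

noncomputable section
open scoped Classical

namespace Lasso

variable {U : Type}

/-- The degree of a vertex. -/
def deg (G : SimpleGraph U) (v : U) : ℕ := (G.neighborSet v).ncard

/-- A leaf is a vertex of degree `1`. -/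
def IsLeaf (G : SimpleGraph U) (v : U) : Prop := deg G v = 1

/-- An interior vertex: a non-leaf vertex of the tree. -/
def Interior (G : SimpleGraph U) (v : U) : Prop := v ∈ G.support ∧ ¬ IsLeaf G v

/-- `G` is an `X`-tree: a finite tree without vertices of degree two whose
    leaf set is exactly `X`. -/
structure IsXTree (X : Set U) (G : SimpleGraph U) : Prop where
  support_finite : G.support.Finite
  support_nonempty : G.support.Nonempty
  connected : ∀ a ∈ G.support, ∀ b ∈ G.support, G.Reachable a b
  acyclic : G.IsAcyclic
  no_deg_two : ∀ v : U, deg G v ≠ 2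
  leaves_eq : X = {v : U | IsLeaf G v}

/-- An edge weighting of `G`: nonnegative, and zero away from the edges of `G`
    (so that it represents an element of `ℝ_{≥0}^E`). -/
structure IsWeighting (G : SimpleGraph U) (ω : Sym2 U → ℝ) : Prop where
  nonneg : ∀ e, 0 ≤ ω e
  zero_off : ∀ e, e ∉ G.edgeSet → ω e = 0

/-- A proper edge weighting: in addition strictly positive on interior edges
    (edges both of whose endpoints are non-leaves). -/
structure IsProperWeighting (G : SimpleGraph U) (ω : Sym2 U → ℝ)
    extends IsWeighting G ω : Prop where
  interior_pos : ∀ e ∈ G.edgeSet, (∀ u ∈ e, ¬ IsLeaf G u) → 0 < ω e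

/-- The set `E_T(x|y)` of edges separating `x` from `y`, i.e. the edges lying
    on every walk from `x` to `y` (in a tree: the edges of the path). -/
def pathEdges (G : SimpleGraph U) (x y : U) : Set (Sym2 U) :=
  {e | e ∈ G.edgeSet ∧ ∀ p : G.Walk x y, e ∈ p.edges}

/-- The induced distance `D_ω(x,y)`. -/
def tdist (G : SimpleGraph U) (ω : Sym2 U → ℝ) (x y : U) : ℝ :=
  ∑ᶠ e ∈ pathEdges G x y, ω e

/-- Path edge set of an unordered pair. -/
def pairPathEdges (G : SimpleGraph U) (c : Sym2 U) : Set (Sym2 U) :=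
  {e | e ∈ G.edgeSet ∧ ∀ x y : U, c = s(x, y) → ∀ p : G.Walk x y, e ∈ p.edges}

/-- `D_ω` on an unordered pair (a cord); `λ^T_c(ω)`. -/
def pdist (G : SimpleGraph U) (ω : Sym2 U → ℝ) (c : Sym2 U) : ℝ :=
  ∑ᶠ e ∈ pairPathEdges G c, ω e

/-- `(G,ω)` and `(G',ω')` are `L`-isometric. -/
def LIso (L : Set (Sym2 U)) (G : SimpleGraph U) (ω : Sym2 U → ℝ)
    (G' : SimpleGraph U) (ω' : Sym2 U → ℝ) : Prop :=
  ∀ x y : U, s(x, y) ∈ L → tdist G ω x y = tdist G' ω' x y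

/-- `L` is a set of cords of `X`: 2-element subsets of `X`. -/
def IsCordSet (X : Set U) (L : Set (Sym2 U)) : Prop :=
  ∀ c ∈ L, ¬ c.IsDiag ∧ ∀ u ∈ c, u ∈ X

/-- The union of all cords in `L`. -/
def cup (L : Set (Sym2 U)) : Set U := {v | ∃ c ∈ L, v ∈ c}

/-- `L` is an edge-weight lasso for `G`. -/
def EdgeWeightLasso (G : SimpleGraph U) (L : Set (Sym2 U)) : Prop :=
  ∀ ω ω' : Sym2 U → ℝ, IsProperWeighting G ω → IsProperWeighting G ω' →
    LIso L G ω G ω' → ω = ω'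

/-- `G ≃ G'` via a graph isomorphism fixing `X` pointwise. -/
def FixingIso (X : Set U) (G G' : SimpleGraph U) : Prop :=
  ∃ φ : G ≃g G', ∀ x ∈ X, φ x = x

/-- `(G,ω)` and `(G',ω')` are isometric: a graph isomorphism fixing `X`
    pointwise and preserving edge weights. -/
def FixingIsometry (X : Set U) (G G' : SimpleGraph U) (ω ω' : Sym2 U → ℝ) : Prop :=
  ∃ φ : G ≃g G', (∀ x ∈ X, φ x = x) ∧
    ∀ e ∈ G.edgeSet, ω' (Sym2.map (fun u => φ u) e) = ω e

/-- `L` is a topological lasso for the `X`-tree `G`. -/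
def TopologicalLasso (X : Set U) (G : SimpleGraph U) (L : Set (Sym2 U)) : Prop :=
  ∀ G' : SimpleGraph U, IsXTree X G' →
    ∀ ω ω' : Sym2 U → ℝ, IsProperWeighting G ω → IsProperWeighting G' ω' →
      LIso L G ω G' ω' → FixingIso X G G'

/-- `L` is a strong lasso for the `X`-tree `G`. -/
def StrongLasso (X : Set U) (G : SimpleGraph U) (L : Set (Sym2 U)) : Prop :=
  ∀ G' : SimpleGraph U, IsXTree X G' →
    ∀ ω ω' : Sym2 U → ℝ, IsProperWeighting G ω → IsProperWeighting G' ω' →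
      LIso L G ω G' ω' → FixingIsometry X G G' ω ω'

/-- `G` displays the quartet `a a' ‖ b b'`: some edge lies on all four paths
    joining `a` or `a'` to `b` or `b'`. -/
def DisplaysQ (G : SimpleGraph U) (a a' b b' : U) : Prop :=
  ∃ e : Sym2 U, e ∈ pathEdges G a b ∧ e ∈ pathEdges G a b' ∧
    e ∈ pathEdges G a' b ∧ e ∈ pathEdges G a' b'

def Distinct4 (a b c d : U) : Prop :=
  a ≠ b ∧ a ≠ c ∧ a ≠ d ∧ b ≠ c ∧ b ≠ d ∧ c ≠ d

/-- `a a' ‖ b b' ∈ Q(G)`: a quartet on four distinct elements of `X`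
    displayed by `G`. -/
def QuartetOf (X : Set U) (G : SimpleGraph U) (a a' b b' : U) : Prop :=
  a ∈ X ∧ a' ∈ X ∧ b ∈ X ∧ b' ∈ X ∧ Distinct4 a a' b b' ∧ DisplaysQ G a a' b b'

/-- `G` displays `a a' | b b'`: it displays neither `a b ‖ a' b'` nor
    `a b' ‖ a' b`. -/
def DisplaysBar (G : SimpleGraph U) (a a' b b' : U) : Prop :=
  ¬ DisplaysQ G a b a' b' ∧ ¬ DisplaysQ G a b' a' b

/-- `A, B` is a virtual `T`-split of `X`. -/
def VirtualSplit (X : Set U) (G : SimpleGraph U) (A B : Set U) : Prop :=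
  A.Nonempty ∧ B.Nonempty ∧ Disjoint A B ∧ A ∪ B = X ∧
    ∀ a ∈ A, ∀ a' ∈ A, ∀ b ∈ B, ∀ b' ∈ B, a ≠ a' → b ≠ b' → DisplaysBar G a a' b b'

/-- `G ≤ G'` (`G'` refines `G`), via the standard characterization
    `Q(T) ⊆ Q(T')` of refinement of `X`-trees. -/
def Refines (X : Set U) (G G' : SimpleGraph U) : Prop :=
  ∀ a a' b b' : U, QuartetOf X G a a' b b' → QuartetOf X G' a a' b b'

/-- `L` is a weak lasso for (coralls) the `X`-tree `G`. -/
def WeakLasso (X : Set U) (G : SimpleGraph U) (L : Set (Sym2 U)) : Prop :=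
  ∀ G' : SimpleGraph U, IsXTree X G' →
    ∀ ω ω' : Sym2 U → ℝ, IsProperWeighting G ω → IsProperWeighting G' ω' →
      LIso L G ω G' ω' → Refines X G G'

/-- The subgraph induced on a vertex set `A`. -/
def restrict {α : Type*} (Γ : SimpleGraph α) (A : Set α) : SimpleGraph α where
  Adj u v := Γ.Adj u v ∧ u ∈ A ∧ v ∈ A
  symm := ⟨by rintro u v ⟨h, hu, hv⟩; exact ⟨h.symm, hv, hu⟩⟩
  loopless := ⟨by rintro v ⟨h, _, _⟩; exact Γ.irrefl h⟩

/-- The restriction of `Γ` to `A` is a connected graph. -/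
def ConnectedOn {α : Type*} (Γ : SimpleGraph α) (A : Set α) : Prop :=
  ∀ x ∈ A, ∀ y ∈ A, (restrict Γ A).Reachable x y

/-- The connected component of `x` in `Γ` is bipartite. -/
def ComponentBipartite {α : Type*} (Γ : SimpleGraph α) (x : α) : Prop :=
  ∃ f : α → Bool, ∀ u v : α, Γ.Reachable x u → Γ.Adj u v → f u ≠ f v

/-- No connected component (of the graph with vertex set `S`) is bipartite. -/
def StronglyNonBipartite {α : Type*} (Γ : SimpleGraph α) (S : Set α) : Prop :=
  ∀ x ∈ S, ¬ ComponentBipartite Γ x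

/-- The graph `Γ` is bipartite. -/
def Bipartite {α : Type*} (Γ : SimpleGraph α) : Prop :=
  ∃ f : α → Bool, ∀ u v : α, Γ.Adj u v → f u ≠ f v

/-- `E_v`: the set of edges of `G` containing `v`. -/
def Ev (G : SimpleGraph U) (v : U) : Set (Sym2 U) := {e | e ∈ G.edgeSet ∧ v ∈ e}

/-- The graph `G(L,v)` on the edge set `E_v`: two distinct edges at `v` are
    adjacent if some cord of `L` has both on its path. -/
def covGraph (G : SimpleGraph U) (L : Set (Sym2 U)) (v : U) : SimpleGraph (Sym2 U) where
  Adj e e' := e ≠ e' ∧ e ∈ Ev G v ∧ e' ∈ Ev G v ∧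
    ∃ x y : U, s(x, y) ∈ L ∧ e ∈ pathEdges G x y ∧ e' ∈ pathEdges G x y
  symm := ⟨by
    rintro e e' ⟨hne, he, he', x, y, hc, hp, hp'⟩
    exact ⟨hne.symm, he', he, x, y, hc, hp', hp⟩⟩
  loopless := ⟨by rintro e ⟨hne, _⟩; exact hne rfl⟩

/-- `G(L,v)` is the complete graph on `E_v`. -/
def CompleteAt (G : SimpleGraph U) (L : Set (Sym2 U)) (v : U) : Prop :=
  ∀ e ∈ Ev G v, ∀ e' ∈ Ev G v, e ≠ e' → (covGraph G L v).Adj e e'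

/-- `L` is a `t`-cover of `G`. -/
def TCover (X : Set U) (G : SimpleGraph U) (L : Set (Sym2 U)) : Prop :=
  cup L = X ∧ ∀ v : U, Interior G v → CompleteAt G L v

/-- The graph `Γ(L, c)` for the cord `c = x x'`, with vertex set `X − {x,x'}`
    and edge set `L^(c)`. -/
def cordGraphC (X : Set U) (G : SimpleGraph U) (L : Set (Sym2 U)) (x x' : U) :
    SimpleGraph U where
  Adj y y' := y ≠ y' ∧ y ≠ x ∧ y ≠ x' ∧ y' ≠ x ∧ y' ≠ x' ∧
    s(y, y') ∈ L ∧ QuartetOf X G x x' y y' ∧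
    ((s(x, y) ∈ L ∧ s(x', y') ∈ L) ∨ (s(x, y') ∈ L ∧ s(x', y) ∈ L))
  symm := ⟨by
    rintro y y' ⟨hne, h1, h2, h3, h4, hL,
      ⟨hx1, hx2, hy1, hy2, ⟨d1, d2, d3, d4, d5, d6⟩, e, p1, p2, p3, p4⟩, hor⟩
    exact ⟨hne.symm, h3, h4, h1, h2, by rwa [Sym2.eq_swap],
      ⟨hx1, hx2, hy2, hy1, ⟨d1, d3, d2, d5, d4, d6.symm⟩, e, p2, p1, p4, p3⟩, hor.symm⟩⟩
  loopless := ⟨by rintro y ⟨hne, _⟩; exact hne rfl⟩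

/-- `v` lies on the path of `G` from `x` to `y`. -/
def OnPath (G : SimpleGraph U) (x y v : U) : Prop :=
  v = x ∨ v = y ∨ ∃ e ∈ pathEdges G x y, v ∈ e

/-- `v = med_G(a,b,c)`: `v` lies on all three pairwise paths. -/
def IsMedian (G : SimpleGraph U) (a b c v : U) : Prop :=
  OnPath G a b v ∧ OnPath G a c v ∧ OnPath G b c v

/-- `L` is a triplet cover of `G`. -/
def TripletCover (X : Set U) (G : SimpleGraph U) (L : Set (Sym2 U)) : Prop :=
  ∀ v : U, Interior G v → ∃ a b c : U, a ∈ X ∧ b ∈ X ∧ c ∈ X ∧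
    a ≠ b ∧ a ≠ c ∧ b ≠ c ∧
    s(a, b) ∈ L ∧ s(a, c) ∈ L ∧ s(b, c) ∈ L ∧ IsMedian G a b c v

/-- `L` is a pointed `x`-cover of `G`. -/
def PointedCover (X : Set U) (G : SimpleGraph U) (L : Set (Sym2 U)) (x : U) : Prop :=
  cup L = X ∧ (∀ v : U, Interior G v → CompleteAt G L v) ∧
    ∀ v : U, Interior G v → ∃ a b : U, a ≠ b ∧
      s(a, x) ∈ L ∧ s(b, x) ∈ L ∧ IsMedian G a b x v

/-- Every interior vertex has degree `3`. -/
def IsBinary (G : SimpleGraph U) : Prop := ∀ v : U, Interior G v → deg G v = 3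

/-- `a, b` form a `T`-cherry with common neighbour `v`. -/
def IsCherry (G : SimpleGraph U) (a b v : U) : Prop :=
  a ≠ b ∧ IsLeaf G a ∧ IsLeaf G b ∧ G.Adj a v ∧ G.Adj b v

/-- `a, b` form a proper `T`-cherry with common neighbour `v` of degree `3`. -/
def IsProperCherry (G : SimpleGraph U) (a b v : U) : Prop :=
  IsCherry G a b v ∧ deg G v = 3

/-- `W` is a `T`-core of `G`. -/
def IsCore (G : SimpleGraph U) (W : Set U) : Prop :=
  W.Nonempty ∧ W ⊆ G.support ∧
    (∀ a ∈ W, ∀ b ∈ W, (restrict G W).Reachable a b) ∧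
    ∀ v ∈ W, deg (restrict G W) v = 1 ∨ deg (restrict G W) v = deg G v

/-- `X_W`: the leaf set of the induced tree `T_W`. -/
def coreLeaves (G : SimpleGraph U) (W : Set U) : Set U :=
  {v | v ∈ W ∧ deg (restrict G W) v = 1}

/-- `g` is the gate of `x` in `W`: the vertex of `W` closest to `x`. -/
def IsGate (G : SimpleGraph U) (W : Set U) (x g : U) : Prop :=
  g ∈ W ∧ ∀ w ∈ W, OnPath G x w g

/-- `L_W`: the cords induced on the gates. -/
def gateCords (G : SimpleGraph U) (W : Set U) (L : Set (Sym2 U)) : Set (Sym2 U) :=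
  {c | ∃ p q y y' : U, s(p, q) ∈ L ∧ IsGate G W p y ∧ IsGate G W q y' ∧
       y ≠ y' ∧ c = s(y, y')}

/-- The gate map of the cherry reduction: `a, b ↦ v`, all else fixed. -/
def cherryMap (a b v : U) : U → U := fun p => if p = a ∨ p = b then v else p

/-- `L_U` for the cherry reduction at the proper cherry `a,b` with neighbour `v`. -/
def cherryLU (L : Set (Sym2 U)) (a b v : U) : Set (Sym2 U) :=
  {c | ∃ p q : U, s(p, q) ∈ L ∧ cherryMap a b v p ≠ cherryMap a b v q ∧
       c = s(cherryMap a b v p, cherryMap a b v q)}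

/-- `X(a, L^{ab}) = {y : ay ∈ L − {ab}}`. -/
def sideSet (L : Set (Sym2 U)) (a b : U) : Set U :=
  {y | s(a, y) ∈ L ∧ s(a, y) ≠ s(a, b)}

/-- `Σ_{c ∈ LU} ρ(c)·λ^{TU}_c = 0` as a linear form on `ℝ^{E_U}`. -/
def RhoAnnihilates (TU : SimpleGraph U) (LU : Set (Sym2 U)) (ρ : Sym2 U → ℝ) : Prop :=
  ∀ η : Sym2 U → ℝ, (∀ e, e ∉ TU.edgeSet → η e = 0) →
    ∑ᶠ c ∈ LU, ρ c * pdist TU η c = 0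

/-- `D_ω(ab|cd)`. -/
def Dq (G : SimpleGraph U) (ω : Sym2 U → ℝ) (a b c d : U) : ℝ :=
  max (tdist G ω a c + tdist G ω b d) (tdist G ω a d + tdist G ω b c)
    - tdist G ω a b - tdist G ω c d

/-- The star tree on `X` with central vertex `z`. -/
def starGraph (X : Set U) (z : U) : SimpleGraph U :=
  SimpleGraph.fromEdgeSet {c | ∃ x ∈ X, c = s(x, z)}

/-- `A ∨ B`: all cords with one end in `A` and the other in `B`. -/
def vee (A B : Set U) : Set (Sym2 U) := {c | ∃ a ∈ A, ∃ b ∈ B, c = s(a, b)}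

/-- A `T`-shelling of `binom(X,2) − L` with cords `aᵢbᵢ` and pivots `pᵢ, qᵢ`. -/
def IsShelling (X : Set U) (G : SimpleGraph U) (L : Set (Sym2 U)) (m : ℕ)
    (a b p q : Fin m → U) : Prop :=
  (∀ i, a i ∈ X ∧ b i ∈ X ∧ a i ≠ b i ∧ s(a i, b i) ∉ L) ∧
  Function.Injective (fun i => s(a i, b i)) ∧
  (∀ x y : U, x ∈ X → y ∈ X → x ≠ y → s(x, y) ∉ L → ∃ i, s(x, y) = s(a i, b i)) ∧
  ∀ i : Fin m,
    p i ∈ X ∧ q i ∈ X ∧ p i ≠ q i ∧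
    p i ≠ a i ∧ p i ≠ b i ∧ q i ≠ a i ∧ q i ≠ b i ∧
    DisplaysQ G (a i) (p i) (b i) (q i) ∧
    ∀ u w : U, u ∈ ({a i, b i, p i, q i} : Set U) → w ∈ ({a i, b i, p i, q i} : Set U) →
      u ≠ w → s(u, w) ≠ s(a i, b i) →
      (s(u, w) ∈ L ∨ ∃ j : Fin m, j < i ∧ s(u, w) = s(a j, b j))

/-- `L` is an `s`-lasso for `G`. -/
def SLasso (X : Set U) (G : SimpleGraph U) (L : Set (Sym2 U)) : Prop :=
  cup L = X ∧ ∃ (m : ℕ) (a b p q : Fin m → U), IsShelling X G L m a b p q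

/-- `L'_{A,B}` of Corollary 3 (the cherry construction). -/
def LAB (L' : Set (Sym2 U)) (X : Set U) (a b : U) (A B : Set U) : Set (Sym2 U) :=
  {c | c ∈ L' ∧ ∀ u ∈ c, u ∈ X ∧ u ≠ a ∧ u ≠ b} ∪
  {c | ∃ x ∈ A ∪ {b}, c = s(a, x)} ∪
  {c | ∃ x ∈ B, c = s(b, x)}

end Lasso
namespace Lasso

variable {U : Type}

lemma mem_support_of_mem_edges' {G : SimpleGraph U} {a b u : U} {e : Sym2 U}
    {p : G.Walk a b} (he : e ∈ p.edges) (hu : u ∈ e) : u ∈ p.support := by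
  induction e with
  | _ x y =>
    rcases Sym2.mem_iff.mp hu with rfl | rfl
    · exact p.fst_mem_support_of_mem_edges he
    · exact p.snd_mem_support_of_mem_edges he

/-- In a path, the only edge containing the start vertex is the first edge. -/
lemma edge_at_start {G : SimpleGraph U} {a b c : U} (h : G.Adj a c) (q : G.Walk c b)
    (hp : (SimpleGraph.Walk.cons h q).IsPath) {e : Sym2 U}
    (he : e ∈ (SimpleGraph.Walk.cons h q).edges) (ha : a ∈ e) : e = s(a, c) := by
  rw [SimpleGraph.Walk.edges_cons] at he
  rcases List.mem_cons.mp he with h1 | h1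
  · exact h1
  · exfalso
    have := mem_support_of_mem_edges' h1 ha
    rw [SimpleGraph.Walk.cons_isPath_iff] at hp
    exact hp.2 this

/-- An interior vertex of a path is contained in two distinct edges of it. -/
lemma two_edges_internal {G : SimpleGraph U} {a b u : U} {p : G.Walk a b}
    (hp : p.IsPath) (hu : u ∈ p.support) (hua : u ≠ a) (hub : u ≠ b) :
    ∃ d1 d2 : Sym2 U, d1 ≠ d2 ∧ d1 ∈ p.edges ∧ d2 ∈ p.edges ∧ u ∈ d1 ∧ u ∈ d2 := by
  induction p with
  | nil => simp at hu; exact absurd hu hua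
  | @cons x c y h q ih =>
    rw [SimpleGraph.Walk.support_cons, List.mem_cons] at hu
    rcases hu with rfl | hu
    · exact absurd rfl hua
    rw [SimpleGraph.Walk.cons_isPath_iff] at hp
    by_cases huc : u = c
    · subst huc
      -- q starts at u; q is not nil since u ≠ b
      cases q with
      | nil => exact absurd rfl hub
      | @cons _ d _ h' q' =>
        refine ⟨s(x, u), s(u, d), ?_, ?_, ?_, ?_, ?_⟩
        · intro hq
          have : s(u,d) ∈ (SimpleGraph.Walk.cons h' q').edges := by simp
          rw [← hq] at this
          exact hp.2 (mem_support_of_mem_edges' this (Sym2.mem_mk_left x u))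
        · simp
        · simp
        · simp
        · simp
    · rcases ih hp.1 hu huc hub with ⟨d1, d2, hne, h1, h2, m1, m2⟩
      exact ⟨d1, d2, hne, by simp [h1], by simp [h2], m1, m2⟩

/-- pathEdges equals the edges of any path (acyclic graph). -/
lemma pathEdges_eq {G : SimpleGraph U} (hG : G.IsAcyclic) {a b : U}
    (p : G.Walk a b) (hp : p.IsPath) : pathEdges G a b = {e | e ∈ p.edges} := by
  ext e
  constructor
  · rintro ⟨-, h2⟩; exact h2 p
  · intro he
    refine ⟨p.edges_subset_edgeSet he, fun q => ?_⟩
    have hPQ := (SimpleGraph.isAcyclic_iff_path_unique.mp hG) ⟨p, hp⟩ q.toPath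
    have : p.edges = q.bypass.edges := by
      have := congrArg (fun r : G.Path a b => (r : G.Walk a b).edges) hPQ
      simpa [SimpleGraph.Walk.toPath] using this
    exact q.edges_bypass_subset (this ▸ he)


lemma exists_adj_of_mem_edge {G : SimpleGraph U} {e : Sym2 U} {v : U}
    (he : e ∈ G.edgeSet) (hv : v ∈ e) : ∃ w, e = s(v, w) ∧ G.Adj v w := by
  rcases Sym2.mem_iff_exists.mp hv with ⟨w, rfl⟩
  exact ⟨w, rfl, he⟩

lemma neighborSet_finite {G : SimpleGraph U} (hfin : G.support.Finite) (v : U) :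
    (G.neighborSet v).Finite := by
  refine hfin.subset ?_
  intro w hw
  exact (G.mem_support).mpr ⟨v, (G.adj_symm hw)⟩

lemma two_le_deg {G : SimpleGraph U} (hfin : G.support.Finite) {v : U} {e1 e2 : Sym2 U}
    (h1 : e1 ∈ G.edgeSet) (h2 : e2 ∈ G.edgeSet) (hne : e1 ≠ e2)
    (m1 : v ∈ e1) (m2 : v ∈ e2) : 2 ≤ deg G v := by
  rcases exists_adj_of_mem_edge h1 m1 with ⟨w1, rfl, hw1⟩
  rcases exists_adj_of_mem_edge h2 m2 with ⟨w2, rfl, hw2⟩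
  have hww : w1 ≠ w2 := fun h => hne (by rw [h])
  have hsub : {w1, w2} ⊆ G.neighborSet v := by
    intro z hz; rcases hz with rfl | hz
    · exact hw1
    · simp at hz; subst hz; exact hw2
  calc 2 = ({w1, w2} : Set U).ncard := (Set.ncard_pair hww).symm
    _ ≤ _ := Set.ncard_le_ncard hsub (neighborSet_finite hfin v)

lemma edges_of_deg_three {G : SimpleGraph U} (hfin : G.support.Finite) {v : U}
    (hd : deg G v = 3) {e : Sym2 U} (he : e ∈ G.edgeSet) (hv : v ∈ e) :
    ∃ f g : Sym2 U, f ∈ G.edgeSet ∧ g ∈ G.edgeSet ∧ v ∈ f ∧ v ∈ g ∧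
      e ≠ f ∧ e ≠ g ∧ f ≠ g ∧
      (∀ e' ∈ G.edgeSet, v ∈ e' → e' = e ∨ e' = f ∨ e' = g) := by
  rcases exists_adj_of_mem_edge he hv with ⟨z, rfl, hz⟩
  have hzmem : z ∈ G.neighborSet v := hz
  have hnfin := neighborSet_finite hfin v
  have hdiff : (G.neighborSet v \ {z}).ncard = 2 := by
    rw [Set.ncard_diff_singleton_of_mem hzmem]; rw [deg] at hd; rw [hd]
  rcases Set.ncard_eq_two.mp hdiff with ⟨z1, z2, hz12, hset⟩
  have hz1 : z1 ∈ G.neighborSet v \ {z} := by rw [hset]; simp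
  have hz2 : z2 ∈ G.neighborSet v \ {z} := by rw [hset]; simp [hz12]
  have smk : ∀ a b : U, G.Adj v a → s(v,a) = s(v,b) → a = b := by
    intro a b ha hab
    rcases Sym2.eq_iff.mp hab with ⟨-, h⟩ | ⟨h1, h2⟩
    · exact h
    · exact absurd h2.symm (G.ne_of_adj ha)
  refine ⟨s(v, z1), s(v, z2), hz1.1, hz2.1, by simp, by simp, ?_, ?_, ?_, ?_⟩
  · intro h; exact (hz1.2 (smk _ _ hz h).symm).elim
  · intro h; exact (hz2.2 (smk _ _ hz h).symm).elim
  · intro h; exact hz12 (smk _ _ hz1.1 h)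
  · intro e' he' hve'
    rcases exists_adj_of_mem_edge he' hve' with ⟨w, rfl, hw⟩
    have hwmem : w ∈ G.neighborSet v := hw
    have : G.neighborSet v = insert z {z1, z2} := by
      rw [← hset, Set.insert_diff_singleton, Set.insert_eq_self.mpr hzmem]
    rw [this] at hwmem
    rcases hwmem with rfl | rfl | rfl
    · exact Or.inl rfl
    · exact Or.inr (Or.inl rfl)
    · exact Or.inr (Or.inr rfl)


lemma mem_support_subset' {G : SimpleGraph U} {u w : U} (p : G.Walk u w) :
    ∀ v ∈ p.support, v ∈ insert u G.support := by
  induction p with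
  | nil => intro v hv; simp at hv; simp [hv]
  | @cons x c y h q ih =>
    intro v hv
    rw [SimpleGraph.Walk.support_cons, List.mem_cons] at hv
    rcases hv with rfl | hv
    · exact Set.mem_insert _ _
    · rcases ih v hv with rfl | hv'
      · exact Set.mem_insert_iff.mpr (Or.inr ((G.mem_support).mpr ⟨x, h.symm⟩))
      · exact Set.mem_insert_iff.mpr (Or.inr hv')

lemma length_le_ncard {G : SimpleGraph U} (hfin : G.support.Finite) {u w : U}
    (p : G.Walk u w) (hp : p.IsPath) : p.length ≤ G.support.ncard := by
  have hins : (insert u G.support).Finite := hfin.insert u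
  have hsub : p.support.toFinset ⊆ hins.toFinset := by
    intro v hv
    rw [List.mem_toFinset] at hv
    rw [Set.Finite.mem_toFinset]
    exact mem_support_subset' p v hv
  have hcard := Finset.card_le_card hsub
  rw [List.toFinset_card_of_nodup hp.support_nodup] at hcard
  rw [SimpleGraph.Walk.length_support] at hcard
  have h2 : hins.toFinset.card = (insert u G.support).ncard :=
    (Set.ncard_eq_toFinset_card _ hins).symm
  have h3 : (insert u G.support).ncard ≤ G.support.ncard + 1 := Set.ncard_insert_le _ _
  omega

lemma exists_S_leaf {G : SimpleGraph U} (hG : G.IsAcyclic) (hfin : G.support.Finite)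
    {S : Set (Sym2 U)} (hS : S ⊆ G.edgeSet) (hne : S.Nonempty) :
    ∃ (u : U) (e : Sym2 U), e ∈ S ∧ u ∈ e ∧ ∀ e' ∈ S, u ∈ e' → e' = e := by
  set P : Set ℕ := {n | ∃ (u w : U) (p : G.Walk u w), p.IsPath ∧
      (∀ e ∈ p.edges, e ∈ S) ∧ p.length = n} with hP
  have h1P : 1 ∈ P := by
    obtain ⟨e0, he0⟩ := hne
    induction e0 with
    | _ u0 w0 =>
      have hadj : G.Adj u0 w0 := hS he0
      refine ⟨u0, w0, SimpleGraph.Walk.cons hadj SimpleGraph.Walk.nil, ?_, ?_, rfl⟩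
      · rw [SimpleGraph.Walk.cons_isPath_iff]
        exact ⟨SimpleGraph.Walk.IsPath.nil, by simp [hadj.ne]⟩
      · intro e he; simp at he; subst he; exact he0
  have hbdd : BddAbove P := by
    refine ⟨G.support.ncard, ?_⟩
    rintro n ⟨u, w, p, hp, -, rfl⟩
    exact length_le_ncard hfin p hp
  have hmem : sSup P ∈ P := Nat.sSup_mem ⟨1, h1P⟩ hbdd
  have hge1 : 1 ≤ sSup P := le_csSup hbdd h1P
  obtain ⟨u, w, p, hp, hpS, hlen⟩ := hmem
  cases p with
  | nil => simp at hlen; omega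
  | @cons _ c _ h q =>
    refine ⟨u, s(u, c), hpS _ (by simp), by simp, ?_⟩
    intro e' hS' hu'
    by_contra hne'
    rcases Sym2.mem_iff_exists.mp hu' with ⟨z, rfl⟩
    have hadj : G.Adj u z := hS hS'
    by_cases hzsup : z ∈ (SimpleGraph.Walk.cons h q).support
    · -- two distinct paths u → z: contradiction with acyclicity
      set p := SimpleGraph.Walk.cons h q
      have q1 : G.Walk u z := p.takeUntil z hzsup
      have hq1 : (p.takeUntil z hzsup).IsPath := hp.takeUntil hzsup
      have q2 : G.Walk u z := SimpleGraph.Walk.cons hadj SimpleGraph.Walk.nil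
      have hq2 : (SimpleGraph.Walk.cons hadj SimpleGraph.Walk.nil).IsPath := by
        rw [SimpleGraph.Walk.cons_isPath_iff]
        exact ⟨SimpleGraph.Walk.IsPath.nil, by simp [hadj.ne]⟩
      have := (SimpleGraph.isAcyclic_iff_path_unique.mp hG)
        ⟨p.takeUntil z hzsup, hq1⟩ ⟨SimpleGraph.Walk.cons hadj SimpleGraph.Walk.nil, hq2⟩
      have hedges : (p.takeUntil z hzsup).edges = [s(u, z)] := by
        have := congrArg (fun r : G.Path u z => (r : G.Walk u z).edges) this
        simpa using this
      have hmem' : s(u, z) ∈ p.edges :=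
        p.edges_takeUntil_subset hzsup (by rw [hedges]; simp)
      -- only edge of p at u is s(u,c)
      have : s(u, z) = s(u, c) := by
        have h1 : u ∈ s(u,z) := by simp
        exact edge_at_start h q hp hmem' h1
      exact hne' this
    · -- extend the path: contradiction with maximality
      have hext : (SimpleGraph.Walk.cons hadj.symm (SimpleGraph.Walk.cons h q)).IsPath := by
        rw [SimpleGraph.Walk.cons_isPath_iff]
        exact ⟨hp, hzsup⟩
      have : (1 + sSup P) ∈ P := by
        refine ⟨z, w, SimpleGraph.Walk.cons hadj.symm (SimpleGraph.Walk.cons h q),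
          hext, ?_, by simp [hlen]; omega⟩
        intro e he
        rw [SimpleGraph.Walk.edges_cons, List.mem_cons] at he
        rcases he with rfl | he
        · rwa [Sym2.eq_swap]
        · exact hpS e he
      have := le_csSup hbdd this
      omega


/-- Only edge of a path at an interior vertex dichotomy helper. -/
lemma two_pathEdges {G : SimpleGraph U} (hG : G.IsAcyclic) {x y u : U}
    (w0 : G.Walk x y) {e : Sym2 U} (he : e ∈ pathEdges G x y) (hu : u ∈ e)
    (hux : u ≠ x) (huy : u ≠ y) :
    ∃ d1 d2 : Sym2 U, d1 ≠ d2 ∧ d1 ∈ pathEdges G x y ∧ d2 ∈ pathEdges G x y ∧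
      u ∈ d1 ∧ u ∈ d2 := by
  have hEq := pathEdges_eq hG w0.bypass w0.bypass_isPath
  have he' : e ∈ w0.bypass.edges := by rw [hEq] at he; exact he
  have husup : u ∈ w0.bypass.support := mem_support_of_mem_edges' he' hu
  obtain ⟨d1, d2, hne, h1, h2, m1, m2⟩ :=
    two_edges_internal w0.bypass_isPath husup hux huy
  exact ⟨d1, d2, hne, by rw [hEq]; exact h1, by rw [hEq]; exact h2, m1, m2⟩

lemma partner_mem {G : SimpleGraph U} (hG : G.IsAcyclic) {p q u : U} (w0 : G.Walk p q)
    {d d' : Sym2 U} (hne : d ≠ d')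
    (hd : d ∈ pathEdges G p q) (hu : u ∈ d) (hup : u ≠ p) (huq : u ≠ q)
    (hall : ∀ e' ∈ pathEdges G p q, u ∈ e' → e' = d ∨ e' = d') :
    d' ∈ pathEdges G p q := by
  obtain ⟨d1, d2, h12, m1, m2, u1, u2⟩ := two_pathEdges hG w0 hd hu hup huq
  rcases hall d1 m1 u1 with rfl | rfl
  · rcases hall d2 m2 u2 with rfl | rfl
    · exact absurd rfl h12
    · exact m2
  · exact m1

/-- Along a path from `a` to `b`, if `R` holds at the first edge and fails at the
last, there is a vertex with an `R` edge and a non-`R` edge. -/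
lemma walk_switch {G : SimpleGraph U} (R : Sym2 U → Prop) :
    ∀ {a b : U} (p : G.Walk a b), p.IsPath → a ≠ b →
    (∀ e ∈ p.edges, a ∈ e → R e) → (∀ e ∈ p.edges, b ∈ e → ¬ R e) →
    ∃ (u : U) (e f : Sym2 U), e ∈ p.edges ∧ f ∈ p.edges ∧ e ≠ f ∧
      u ∈ e ∧ u ∈ f ∧ R e ∧ ¬ R f := by
  intro a b p
  induction p with
  | nil => intro _ hab _ _; exact absurd rfl hab
  | @cons x c y h q ih =>
    intro hp hab hhead hlast
    have he1 : R s(x, c) := hhead _ (by simp) (by simp)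
    have hcb : c ≠ y := by
      rintro rfl
      exact hlast s(x, c) (by simp) (by simp) he1
    cases q with
    | nil => exact absurd rfl hcb
    | @cons _ d _ h' q' =>
      by_cases hR2 : R s(c, d)
      · obtain ⟨u, e, f, hef1, hef2, hne, hu1, hu2, hRe, hRf⟩ :=
          ih ((SimpleGraph.Walk.cons_isPath_iff _ _).mp hp).1 hcb
            (fun e he hc => by
              rw [edge_at_start h' q' ((SimpleGraph.Walk.cons_isPath_iff _ _).mp hp).1 he hc]
              exact hR2)
            (fun e he hb => hlast e (by rw [SimpleGraph.Walk.edges_cons]; exact List.mem_cons_of_mem _ he) hb)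
        exact ⟨u, e, f, by rw [SimpleGraph.Walk.edges_cons]; exact List.mem_cons_of_mem _ hef1, by rw [SimpleGraph.Walk.edges_cons]; exact List.mem_cons_of_mem _ hef2, hne, hu1, hu2, hRe, hRf⟩
      · refine ⟨c, s(x, c), s(c, d), by simp, by simp, ?_, by simp, by simp, he1, hR2⟩
        intro hq
        have hnodup := hp.edges_nodup
        rw [SimpleGraph.Walk.edges_cons] at hnodup
        exact (List.nodup_cons.mp hnodup).1 (by rw [hq]; simp)

/-- The base weighting together with a perturbation is proper. -/
lemma proper_pert {G : SimpleGraph U} (η : Sym2 U → ℝ)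
    (hz : ∀ e, e ∉ G.edgeSet → η e = 0) (hb : ∀ e, -(1/2 : ℝ) ≤ η e) :
    IsProperWeighting G (fun e => (if e ∈ G.edgeSet then (1:ℝ) else 0) + η e) := by
  refine ⟨⟨?_, ?_⟩, ?_⟩
  · intro e
    by_cases he : e ∈ G.edgeSet
    · have := hb e; simp only [he, if_true]; linarith
    · simp [he, hz e he]
  · intro e he; simp [he, hz e he]
  · intro e he _
    have := hb e; simp only [he, if_true]; linarith

lemma lasso_contra {G : SimpleGraph U} {L : Set (Sym2 U)} (hG : G.IsAcyclic)
    (h : EdgeWeightLasso G L)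
    (hreach : ∀ p q : U, s(p, q) ∈ L → G.Reachable p q)
    (η : Sym2 U → ℝ)
    (hz : ∀ e, e ∉ G.edgeSet → η e = 0) (hb : ∀ e, -(1/2 : ℝ) ≤ η e)
    (hsum : ∀ p q : U, s(p, q) ∈ L → ∑ᶠ e ∈ pathEdges G p q, η e = 0)
    (hnz : ∃ e, η e ≠ 0) : False := by
  set ωb : Sym2 U → ℝ := fun e => if e ∈ G.edgeSet then (1:ℝ) else 0 with hωb
  have hω : IsProperWeighting G ωb := by
    have := proper_pert (G := G) (fun _ => 0) (fun _ _ => rfl) (fun _ => by norm_num)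
    simpa using this
  have hω' : IsProperWeighting G (fun e => ωb e + η e) := proper_pert η hz hb
  have hiso : LIso L G ωb G (fun e => ωb e + η e) := by
    intro p q hpq
    obtain ⟨w0⟩ := hreach p q hpq
    have hEq := pathEdges_eq hG w0.bypass w0.bypass_isPath
    have hset : pathEdges G p q = ↑(w0.bypass.edges.toFinset) := by
      rw [hEq]; ext e; simp
    have hs := hsum p q hpq
    rw [hset, finsum_mem_coe_finset] at hs
    rw [tdist, tdist, hset, finsum_mem_coe_finset, finsum_mem_coe_finset,
      Finset.sum_add_distrib, hs, add_zero]
  have heq := h ωb (fun e => ωb e + η e) hω hω' hiso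
  obtain ⟨e, hne⟩ := hnz
  have := congrFun heq e
  have : η e = 0 := by linarith [this.symm]
  exact hne this


/-- Corollary 3: if `L` is an edge-weight lasso for a binary `X`-tree `T`,
then the graph `Γ(L) = (X, L)` is connected. -/
theorem edgeWeightLasso_binary_connected {U : Type}
    (X : Set U) (G : SimpleGraph U)
    (hXfin : X.Finite) (hX3 : 3 ≤ X.ncard) (hT : IsXTree X G)
    (hbin : IsBinary G)
    (L : Set (Sym2 U)) (hL : IsCordSet X L)
    (h : EdgeWeightLasso G L) :
    ∀ x ∈ X, ∀ y ∈ X, (SimpleGraph.fromEdgeSet L).Reachable x y := by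
  intro x hx y hy
  by_contra hn
  have hleafX : ∀ z ∈ X, IsLeaf G z := by
    intro z hz; rw [hT.leaves_eq] at hz; exact hz
  have hdegX : ∀ z ∈ X, deg G z = 1 := fun z hz => hleafX z hz
  have hsuppX : ∀ z ∈ X, z ∈ G.support := by
    intro z hz
    obtain ⟨w, hw⟩ := Set.ncard_eq_one.mp (hdegX z hz)
    have hwm : w ∈ G.neighborSet z := by rw [hw]; exact Set.mem_singleton w
    exact (G.mem_support).mpr ⟨w, hwm⟩
  have hxy : x ≠ y := by rintro rfl; exact hn (SimpleGraph.Reachable.refl _)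
  set Γ := SimpleGraph.fromEdgeSet L with hΓ
  set A : Set U := {z | z ∈ X ∧ Γ.Reachable x z} with hA
  set Bs : Set U := {z | z ∈ X ∧ ¬ Γ.Reachable x z} with hBdef
  have hxA : x ∈ A := ⟨hx, SimpleGraph.Reachable.refl x⟩
  have hyB : y ∈ Bs := ⟨hy, hn⟩
  have hAX : ∀ z ∈ A, z ∈ X := fun z hz => hz.1
  have hBX : ∀ z ∈ Bs, z ∈ X := fun z hz => hz.1
  have hdisj : ∀ z, z ∈ A → z ∈ Bs → False := fun z h1 h2 => h2.2 h1.2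
  have hcordX : ∀ p q : U, s(p, q) ∈ L → p ∈ X ∧ q ∈ X ∧ p ≠ q := by
    intro p q hpq
    obtain ⟨hd, hm⟩ := hL _ hpq
    refine ⟨hm p (Sym2.mem_mk_left _ _), hm q (Sym2.mem_mk_right _ _), ?_⟩
    rintro rfl; exact hd (Sym2.mk_isDiag_iff.mpr rfl)
  have hcordAB : ∀ p q : U, s(p, q) ∈ L → (p ∈ A ∧ q ∈ A) ∨ (p ∈ Bs ∧ q ∈ Bs) := by
    intro p q hpq
    obtain ⟨hpX, hqX, hne⟩ := hcordX p q hpq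
    have hadj : Γ.Adj p q := (SimpleGraph.fromEdgeSet_adj L).mpr ⟨hpq, hne⟩
    by_cases hr : Γ.Reachable x p
    · exact Or.inl ⟨⟨hpX, hr⟩, ⟨hqX, hr.trans hadj.reachable⟩⟩
    · exact Or.inr ⟨⟨hpX, hr⟩, ⟨hqX, fun hq' => hr (hq'.trans hadj.symm.reachable)⟩⟩
  set TA : Set (Sym2 U) := {e | ∃ p ∈ A, ∃ q ∈ A, e ∈ pathEdges G p q} with hTAdef
  set TB : Set (Sym2 U) := {e | ∃ p ∈ Bs, ∃ q ∈ Bs, e ∈ pathEdges G p q} with hTBdef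
  have hreach : ∀ p q : U, s(p, q) ∈ L → G.Reachable p q := by
    intro p q hpq
    obtain ⟨hpX, hqX, -⟩ := hcordX p q hpq
    exact hT.connected p (hsuppX p hpX) q (hsuppX q hqX)
  have hLv : ∀ (v p q : U) (e : Sym2 U), p ∈ X → q ∈ X → e ∈ pathEdges G p q →
      v ∈ e → v ≠ p → v ≠ q → 2 ≤ deg G v := by
    intro v p q e hp hq he hv hvp hvq
    obtain ⟨w0⟩ := hT.connected p (hsuppX p hp) q (hsuppX q hq)
    obtain ⟨d1, d2, hne, h1, h2, m1, m2⟩ := two_pathEdges hT.acyclic w0 he hv hvp hvq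
    exact two_le_deg hT.support_finite h1.1 h2.1 hne m1 m2
  by_cases hcov : ∀ e ∈ G.edgeSet, e ∈ TA ∨ e ∈ TB
  · -- every edge is used by some cord-side pair: find the special vertex u
    have hconf : ∃ (u : U) (e1 f g : Sym2 U),
        e1 ∈ G.edgeSet ∧ f ∈ G.edgeSet ∧ g ∈ G.edgeSet ∧
        u ∈ e1 ∧ u ∈ f ∧ u ∈ g ∧ e1 ≠ f ∧ e1 ≠ g ∧ f ≠ g ∧
        (∀ e' ∈ G.edgeSet, u ∈ e' → e' = e1 ∨ e' = f ∨ e' = g) ∧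
        u ∉ X ∧ f ∉ TB ∧ g ∉ TA := by
      by_cases hScase : ∃ e, e ∈ TA ∧ e ∈ TB
      · -- the intersection subforest is nonempty: take a leaf of it
        have hSsub : (TA ∩ TB : Set (Sym2 U)) ⊆ G.edgeSet := by
          rintro e ⟨⟨p, hp, q, hq, hm⟩, -⟩; exact hm.1
        obtain ⟨eW, hW⟩ := hScase
        obtain ⟨u, e1, he1S, hue1, huniq⟩ :=
          exists_S_leaf hT.acyclic hT.support_finite hSsub ⟨eW, hW⟩
        have he1E : e1 ∈ G.edgeSet := hSsub he1S
        have huX : u ∉ X := by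
          intro huX'
          have hdeg1 : deg G u = 1 := hdegX u huX'
          have huA : u ∈ A := by
            obtain ⟨p, hp, q, hq, hm⟩ := he1S.1
            by_cases hup : u = p
            · exact hup ▸ hp
            by_cases huq : u = q
            · exact huq ▸ hq
            have := hLv u p q e1 (hAX p hp) (hAX q hq) hm hue1 hup huq
            omega
          have huB : u ∈ Bs := by
            obtain ⟨p, hp, q, hq, hm⟩ := he1S.2
            by_cases hup : u = p
            · exact hup ▸ hp
            by_cases huq : u = q
            · exact huq ▸ hq
            have := hLv u p q e1 (hBX p hp) (hBX q hq) hm hue1 hup huq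
            omega
          exact hdisj u huA huB
        have husup : u ∈ G.support := by
          obtain ⟨w, -, hw⟩ := exists_adj_of_mem_edge he1E hue1
          exact (G.mem_support).mpr ⟨w, hw⟩
        have hint : Interior G u := by
          refine ⟨husup, ?_⟩
          rw [hT.leaves_eq] at huX
          exact huX
        have hdeg3 : deg G u = 3 := hbin u hint
        obtain ⟨f, g, hfE, hgE, huf, hug, hef, heg, hfg, hall⟩ :=
          edges_of_deg_three hT.support_finite hdeg3 he1E hue1
        have hfS : f ∉ (TA ∩ TB : Set (Sym2 U)) := fun hf => hef (huniq f hf huf).symm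
        have hgS : g ∉ (TA ∩ TB : Set (Sym2 U)) := fun hg => heg (huniq g hg hug).symm
        have hC1 : f ∈ TB ∨ g ∈ TB := by
          by_contra hc; push_neg at hc
          obtain ⟨p, hp, q, hq, hm⟩ := he1S.2
          have hup : u ≠ p := by rintro rfl; exact huX (hBX _ hp)
          have huq : u ≠ q := by rintro rfl; exact huX (hBX _ hq)
          obtain ⟨w0⟩ := hT.connected p (hsuppX p (hBX p hp)) q (hsuppX q (hBX q hq))
          obtain ⟨d1, d2, hd12, m1, m2, u1, u2⟩ :=
            two_pathEdges hT.acyclic w0 hm hue1 hup huq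
          have hd1 : d1 = e1 := by
            rcases hall d1 m1.1 u1 with hh | hh | hh
            · exact hh
            · exact absurd ⟨p, hp, q, hq, hh ▸ m1⟩ hc.1
            · exact absurd ⟨p, hp, q, hq, hh ▸ m1⟩ hc.2
          have hd2 : d2 = e1 := by
            rcases hall d2 m2.1 u2 with hh | hh | hh
            · exact hh
            · exact absurd ⟨p, hp, q, hq, hh ▸ m2⟩ hc.1
            · exact absurd ⟨p, hp, q, hq, hh ▸ m2⟩ hc.2
          exact hd12 (by rw [hd1, hd2])
        have hC2 : f ∈ TA ∨ g ∈ TA := by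
          by_contra hc; push_neg at hc
          obtain ⟨p, hp, q, hq, hm⟩ := he1S.1
          have hup : u ≠ p := by rintro rfl; exact huX (hAX _ hp)
          have huq : u ≠ q := by rintro rfl; exact huX (hAX _ hq)
          obtain ⟨w0⟩ := hT.connected p (hsuppX p (hAX p hp)) q (hsuppX q (hAX q hq))
          obtain ⟨d1, d2, hd12, m1, m2, u1, u2⟩ :=
            two_pathEdges hT.acyclic w0 hm hue1 hup huq
          have hd1 : d1 = e1 := by
            rcases hall d1 m1.1 u1 with hh | hh | hh
            · exact hh
            · exact absurd ⟨p, hp, q, hq, hh ▸ m1⟩ hc.1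
            · exact absurd ⟨p, hp, q, hq, hh ▸ m1⟩ hc.2
          have hd2 : d2 = e1 := by
            rcases hall d2 m2.1 u2 with hh | hh | hh
            · exact hh
            · exact absurd ⟨p, hp, q, hq, hh ▸ m2⟩ hc.1
            · exact absurd ⟨p, hp, q, hq, hh ▸ m2⟩ hc.2
          exact hd12 (by rw [hd1, hd2])
        by_cases hfTA : f ∈ TA
        · have hfTB : f ∉ TB := fun hfb => hfS ⟨hfTA, hfb⟩
          have hgTB : g ∈ TB := hC1.resolve_left hfTB
          have hgTA : g ∉ TA := fun hga => hgS ⟨hga, hgTB⟩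
          exact ⟨u, e1, f, g, he1E, hfE, hgE, hue1, huf, hug, hef, heg, hfg, hall,
            huX, hfTB, hgTA⟩
        · have hgTA : g ∈ TA := hC2.resolve_left hfTA
          have hgTB : g ∉ TB := fun hgb => hgS ⟨hgTA, hgb⟩
          refine ⟨u, e1, g, f, he1E, hgE, hfE, hue1, hug, huf, heg, hef, hfg.symm,
            ?_, huX, hgTB, hfTA⟩
          intro e' he' hu'
          rcases hall e' he' hu' with hh | hh | hh
          · exact Or.inl hh
          · exact Or.inr (Or.inr hh)
          · exact Or.inr (Or.inl hh)
      · -- the two subforests are edge-disjoint: switch along a path from x to y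
        push_neg at hScase
        obtain ⟨w0⟩ := hT.connected x (hsuppX x hx) y (hsuppX y hy)
        have hpthP : w0.bypass.IsPath := w0.bypass_isPath
        obtain ⟨u, e, f, heP, hfP, hef, hue, huf, hRe, hRf⟩ :=
          walk_switch (fun e => e ∉ TB) w0.bypass hpthP hxy
            (by
              intro e he hxe
              rintro ⟨p, hp, q, hq, hm⟩
              have hxp : x ≠ p := by rintro rfl; exact hdisj x hxA hp
              have hxq : x ≠ q := by rintro rfl; exact hdisj x hxA hq
              have := hLv x p q e (hBX p hp) (hBX q hq) hm hxe hxp hxq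
              have := hdegX x hx
              omega)
            (by
              intro e he hye hnot
              have heE : e ∈ G.edgeSet := w0.bypass.edges_subset_edgeSet he
              rcases hcov e heE with hTAe | hTBe
              · obtain ⟨p, hp, q, hq, hm⟩ := hTAe
                have hyp : y ≠ p := by rintro rfl; exact hdisj y hp hyB
                have hyq : y ≠ q := by rintro rfl; exact hdisj y hq hyB
                have := hLv y p q e (hAX p hp) (hAX q hq) hm hye hyp hyq
                have := hdegX y hy
                omega
              · exact hnot hTBe)
        have hfTB : f ∈ TB := not_not.mp hRf
        have hfTA : f ∉ TA := fun hfa => hScase f hfa hfTB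
        have heE : e ∈ G.edgeSet := w0.bypass.edges_subset_edgeSet heP
        have hfE : f ∈ G.edgeSet := w0.bypass.edges_subset_edgeSet hfP
        have huX : u ∉ X := by
          intro hu'
          have h2 := two_le_deg hT.support_finite heE hfE hef hue huf
          have h1 := hdegX u hu'
          omega
        have husup : u ∈ G.support := by
          obtain ⟨w, -, hw⟩ := exists_adj_of_mem_edge heE hue
          exact (G.mem_support).mpr ⟨w, hw⟩
        have hint : Interior G u := by
          refine ⟨husup, ?_⟩
          rw [hT.leaves_eq] at huX
          exact huX
        have hdeg3 : deg G u = 3 := hbin u hint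
        obtain ⟨f', g', hf'E, hg'E, huf', hug', hef', heg', hf'g', hall⟩ :=
          edges_of_deg_three hT.support_finite hdeg3 heE hue
        have hfc : f = f' ∨ f = g' := by
          rcases hall f hfE huf with hh | hh | hh
          · exact absurd hh.symm hef
          · exact Or.inl hh
          · exact Or.inr hh
        rcases hfc with rfl | rfl
        · refine ⟨u, g', e, f, hg'E, heE, hfE, hug', hue, huf, heg'.symm,
            hf'g'.symm, hef, ?_, huX, hRe, hfTA⟩
          intro e' he' hu'
          rcases hall e' he' hu' with hh | hh | hh
          · exact Or.inr (Or.inl hh)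
          · exact Or.inr (Or.inr hh)
          · exact Or.inl hh
        · refine ⟨u, f', e, f, hf'E, heE, hfE, huf', hue, huf, hef'.symm,
            hf'g', hef, ?_, huX, hRe, hfTA⟩
          intro e' he' hu'
          rcases hall e' he' hu' with hh | hh | hh
          · exact Or.inr (Or.inl hh)
          · exact Or.inl hh
          · exact Or.inr (Or.inr hh)
    obtain ⟨u, e1, f, g, he1E, hfE, hgE, hue1, huf, hug, hef, heg, hfg, hall,
      huX, hfTB, hgTA⟩ := hconf
    set η : Sym2 U → ℝ := fun e => (if e = e1 then (-(1:ℝ)/2) else 0) +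
      (if e = f then (1:ℝ)/2 else 0) + (if e = g then (1:ℝ)/2 else 0) with hη
    refine lasso_contra hT.acyclic h hreach η ?_ ?_ ?_ ⟨e1, ?_⟩
    · intro e he
      have h1 : e ≠ e1 := by rintro rfl; exact he he1E
      have h2 : e ≠ f := by rintro rfl; exact he hfE
      have h3 : e ≠ g := by rintro rfl; exact he hgE
      have : η e = (if e = e1 then (-(1:ℝ)/2) else 0) +
        (if e = f then (1:ℝ)/2 else 0) + (if e = g then (1:ℝ)/2 else 0) := rfl
      rw [this, if_neg h1, if_neg h2, if_neg h3]; norm_num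
    · intro e
      have hrfl : η e = (if e = e1 then (-(1:ℝ)/2) else 0) +
        (if e = f then (1:ℝ)/2 else 0) + (if e = g then (1:ℝ)/2 else 0) := rfl
      rw [hrfl]
      have t1 : (-(1:ℝ)/2) ≤ (if e = e1 then (-(1:ℝ)/2) else 0) := by
        split <;> norm_num
      have t2 : (0:ℝ) ≤ (if e = f then (1:ℝ)/2 else 0) := by split <;> norm_num
      have t3 : (0:ℝ) ≤ (if e = g then (1:ℝ)/2 else 0) := by split <;> norm_num
      linarith
    · intro p q hpq
      obtain ⟨hpX, hqX, hpq'⟩ := hcordX p q hpq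
      obtain ⟨w0⟩ := hreach p q hpq
      have hset : pathEdges G p q = ↑(w0.bypass.edges.toFinset) := by
        rw [pathEdges_eq hT.acyclic w0.bypass w0.bypass_isPath]
        ext e; simp
      have hmemIff : ∀ e : Sym2 U,
          e ∈ w0.bypass.edges.toFinset ↔ e ∈ pathEdges G p q := by
        intro e; rw [hset]; exact Iff.rfl
      have hup : u ≠ p := by rintro rfl; exact huX hpX
      have huq : u ≠ q := by rintro rfl; exact huX hqX
      rw [hset, finsum_mem_coe_finset]
      have hsplit : ∑ e ∈ w0.bypass.edges.toFinset, η e =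
          (if e1 ∈ w0.bypass.edges.toFinset then (-(1:ℝ)/2) else 0) +
          (if f ∈ w0.bypass.edges.toFinset then (1:ℝ)/2 else 0) +
          (if g ∈ w0.bypass.edges.toFinset then (1:ℝ)/2 else 0) := by
        have : ∀ e : Sym2 U, η e = (if e = e1 then (-(1:ℝ)/2) else 0) +
            (if e = f then (1:ℝ)/2 else 0) + (if e = g then (1:ℝ)/2 else 0) :=
          fun _ => rfl
        simp only [this]
        rw [Finset.sum_add_distrib, Finset.sum_add_distrib,
          Finset.sum_ite_eq', Finset.sum_ite_eq', Finset.sum_ite_eq']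
      rw [hsplit]
      rcases hcordAB p q hpq with ⟨h1, h2⟩ | ⟨h1, h2⟩
      · have hgnot : g ∉ pathEdges G p q := fun hm => hgTA ⟨p, h1, q, h2, hm⟩
        have hallpq : ∀ e' ∈ pathEdges G p q, u ∈ e' → e' = e1 ∨ e' = f := by
          intro e' hm hu'
          rcases hall e' hm.1 hu' with hh | hh | hh
          · exact Or.inl hh
          · exact Or.inr hh
          · exact absurd (hh ▸ hm) hgnot
        have hgfs : g ∉ w0.bypass.edges.toFinset := fun hgm =>
          hgnot ((hmemIff g).mp hgm)
        by_cases he1fs : e1 ∈ w0.bypass.edges.toFinset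
        · have hffs : f ∈ w0.bypass.edges.toFinset := by
            rw [hmemIff]
            exact partner_mem hT.acyclic w0 hef ((hmemIff e1).mp he1fs) hue1 hup huq hallpq
          rw [if_pos he1fs, if_pos hffs, if_neg hgfs]; norm_num
        · have hffs : f ∉ w0.bypass.edges.toFinset := by
            intro hffs'
            apply he1fs
            rw [hmemIff]
            exact partner_mem hT.acyclic w0 hef.symm ((hmemIff f).mp hffs') huf hup huq
              (fun e' hm hu' => (hallpq e' hm hu').symm)
          rw [if_neg he1fs, if_neg hffs, if_neg hgfs]; norm_num
      · have hfnot : f ∉ pathEdges G p q := fun hm => hfTB ⟨p, h1, q, h2, hm⟩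
        have hallpq : ∀ e' ∈ pathEdges G p q, u ∈ e' → e' = e1 ∨ e' = g := by
          intro e' hm hu'
          rcases hall e' hm.1 hu' with hh | hh | hh
          · exact Or.inl hh
          · exact absurd (hh ▸ hm) hfnot
          · exact Or.inr hh
        have hffs : f ∉ w0.bypass.edges.toFinset := fun hfm =>
          hfnot ((hmemIff f).mp hfm)
        by_cases he1fs : e1 ∈ w0.bypass.edges.toFinset
        · have hgfs : g ∈ w0.bypass.edges.toFinset := by
            rw [hmemIff]
            exact partner_mem hT.acyclic w0 heg ((hmemIff e1).mp he1fs) hue1 hup huq hallpq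
          rw [if_pos he1fs, if_neg hffs, if_pos hgfs]; norm_num
        · have hgfs : g ∉ w0.bypass.edges.toFinset := by
            intro hgfs'
            apply he1fs
            rw [hmemIff]
            exact partner_mem hT.acyclic w0 heg.symm ((hmemIff g).mp hgfs') hug hup huq
              (fun e' hm hu' => (hallpq e' hm hu').symm)
          rw [if_neg he1fs, if_neg hffs, if_neg hgfs]; norm_num
    · have hrfl : η e1 = (if e1 = e1 then (-(1:ℝ)/2) else 0) +
        (if e1 = f then (1:ℝ)/2 else 0) + (if e1 = g then (1:ℝ)/2 else 0) := rfl
      rw [hrfl, if_pos rfl, if_neg hef, if_neg heg]; norm_num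
  · -- some edge is on no cord path at all
    push_neg at hcov
    obtain ⟨e0, he0, hnTA, hnTB⟩ := hcov
    refine lasso_contra hT.acyclic h hreach
      (fun e => if e = e0 then (1/2 : ℝ) else 0) ?_ ?_ ?_
      ⟨e0, by show (if e0 = e0 then (1/2:ℝ) else 0) ≠ 0; rw [if_pos rfl]; norm_num⟩
    · intro e he
      show (if e = e0 then (1/2:ℝ) else 0) = 0
      rw [if_neg]; rintro rfl; exact he he0
    · intro e
      show -(1/2:ℝ) ≤ (if e = e0 then (1/2:ℝ) else 0)
      by_cases h1 : e = e0
      · rw [if_pos h1]; norm_num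
      · rw [if_neg h1]; norm_num
    · intro p q hpq
      have hnot : e0 ∉ pathEdges G p q := by
        intro hmem
        rcases hcordAB p q hpq with ⟨h1, h2⟩ | ⟨h1, h2⟩
        · exact hnTA ⟨p, h1, q, h2, hmem⟩
        · exact hnTB ⟨p, h1, q, h2, hmem⟩
      obtain ⟨w0⟩ := hreach p q hpq
      have hset : pathEdges G p q = ↑(w0.bypass.edges.toFinset) := by
        rw [pathEdges_eq hT.acyclic w0.bypass w0.bypass_isPath]
        ext e; simp
      rw [hset, finsum_mem_coe_finset]
      have : ∑ e ∈ w0.bypass.edges.toFinset, (if e = e0 then (1/2:ℝ) else 0) =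
          (if e0 ∈ w0.bypass.edges.toFinset then (1/2:ℝ) else 0) :=
        Finset.sum_ite_eq' _ _ _
      rw [this, if_neg]
      intro hfs
      apply hnot
      rw [hset]
      exact hfs


end Lasso
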